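/- Let Ω be second countable, (T(t))_{t≥0} a positive strong Feller semigroup on B_b(Ω) with sup_{t ≥ τ} ‖T(t)‖ < ∞ for some τ > 0, and μ a strictly positive, finite, invariant Borel measure. Assume that for all x ∈ Ω and t > 0 there exists 0 ≤ k_{t,x} ∈ L¹(Ω,μ) with (T(t)f)(x) = ∫ k_{t,x} f dμ for all f ∈ B_b(Ω), and that for each c, t > 0 the family { T(t)f : |f| ≤ c } is equicontinuous. Then for every x ∈ Ω the family { k_{t,x} : t ≥ 2τ } is uniformly integrable: for all ε > 0 there exists δ > 0 such that ∫_A k_{t,x} dμ < ε whenever t ≥ 2τ and μ(A) < δ. -/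

import Mathlib

open MeasureTheory Filter Topology Set

/-- `Bb f`: `f` is a bounded Borel measurable real-valued function. -/
def Bb {Ω : Type*} [MeasurableSpace Ω] (f : Ω → ℝ) : Prop :=
  Measurable f ∧ ∃ C : ℝ, ∀ x, |f x| ≤ C

theorem stmt_14 {Ω : Type*} [TopologicalSpace Ω] [T2Space Ω] [SecondCountableTopology Ω]
    [MeasurableSpace Ω] [BorelSpace Ω]
    (μ : Measure Ω) [IsFiniteMeasure μ]
    (hμpos : ∀ U : Set Ω, IsOpen U → U.Nonempty → 0 < μ U)
    (T : ℝ → (Ω → ℝ) → (Ω → ℝ))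
    (hTBb : ∀ t, 0 ≤ t → ∀ f, Bb f → Bb (T t f))
    (hadd : ∀ t, 0 ≤ t → ∀ f g, Bb f → Bb g → T t (f + g) = T t f + T t g)
    (hsmul : ∀ t, 0 ≤ t → ∀ (c : ℝ) (f), Bb f → T t (c • f) = c • T t f)
    (hpos : ∀ t, 0 ≤ t → ∀ f, Bb f → (∀ x, 0 ≤ f x) → ∀ x, 0 ≤ T t f x)
    (hT0 : ∀ f, Bb f → T 0 f = f)
    (hsg : ∀ s t : ℝ, 0 ≤ s → 0 ≤ t → ∀ f, Bb f → T (s + t) f = T s (T t f))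
    (hSF : ∀ t, 0 < t → ∀ f, Bb f → Continuous (T t f))
    (hinv : ∀ t, 0 ≤ t → ∀ f, Bb f → ∫ x, T t f x ∂μ = ∫ x, f x ∂μ)
    (τ : ℝ) (hτ : 0 < τ)
    (hbdd : ∃ M : ℝ, ∀ t, τ ≤ t → ∀ f, Bb f → (∀ x, |f x| ≤ 1) → ∀ x, |T t f x| ≤ M)
    (K : ℝ → Ω → Ω → ℝ)
    (hK : ∀ t, 0 < t → ∀ x : Ω, (∀ᵐ y ∂μ, 0 ≤ K t x y) ∧ Integrable (K t x) μ ∧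
      ∀ f, Bb f → T t f x = ∫ y, K t x y * f y ∂μ)
    (hequi : ∀ c t : ℝ, 0 < c → 0 < t → ∀ x : Ω, ∀ ε > (0 : ℝ),
      ∃ U : Set Ω, IsOpen U ∧ x ∈ U ∧ ∀ y ∈ U, ∀ f, Bb f → (∀ z, |f z| ≤ c) →
        |T t f y - T t f x| < ε) :
    ∀ x : Ω, ∀ ε > (0 : ℝ), ∃ δ > (0 : ℝ), ∀ t, 2 * τ ≤ t →
      ∀ A : Set Ω, MeasurableSet A → μ A < ENNReal.ofReal δ →
        ∫ y in A, K t x y ∂μ < ε := by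
  intro x ε hε
  obtain ⟨M, hM⟩ := hbdd
  set M' : ℝ := max M 1 with hM'def
  have hM'pos : (0:ℝ) < M' := lt_of_lt_of_le one_pos (le_max_right _ _)
  obtain ⟨hK0nn, hK0int, hK0rep⟩ := hK τ hτ x
  -- choose truncation level R
  have hlim : Tendsto (fun n : ℕ => ∫ y, max (K τ x y - n) 0 ∂μ) atTop (𝓝 0) := by
    have hbd : ∀ n : ℕ, ∀ᵐ y ∂μ, ‖max (K τ x y - n) 0‖ ≤ |K τ x y| := by
      intro n
      refine ae_of_all _ fun y => ?_
      rw [Real.norm_eq_abs, abs_of_nonneg (le_max_right _ _)]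
      refine max_le ?_ (abs_nonneg _)
      have h1 : (0:ℝ) ≤ (n:ℝ) := Nat.cast_nonneg n
      have h2 := le_abs_self (K τ x y)
      linarith
    have hptw : ∀ᵐ y ∂μ, Tendsto (fun n : ℕ => max (K τ x y - n) 0) atTop (𝓝 0) := by
      refine ae_of_all _ fun y => ?_
      refine tendsto_const_nhds.congr' ?_
      filter_upwards [eventually_ge_atTop ⌈K τ x y⌉₊] with n hn
      have : K τ x y ≤ (n:ℝ) := le_trans (Nat.le_ceil _) (by exact_mod_cast hn)
      simp [max_eq_right, sub_nonpos.mpr this]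
    have hD := tendsto_integral_of_dominated_convergence (μ := μ)
      (F := fun (n : ℕ) y => max (K τ x y - n) 0) (f := fun _ => (0:ℝ)) (fun y => |K τ x y|)
      (fun n => ((hK0int.aestronglyMeasurable.aemeasurable.sub aemeasurable_const).max
        aemeasurable_const).aestronglyMeasurable) hK0int.abs hbd hptw
    simpa using hD
  have hEv : ∀ᶠ n : ℕ in atTop, ∫ y, max (K τ x y - n) 0 ∂μ < ε / (2 * M') := by
    have := hlim.eventually (eventually_lt_nhds (show (0:ℝ) < ε / (2 * M') by positivity))
    exact this
  obtain ⟨n, hn⟩ := hEv.exists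
  set R : ℝ := (n : ℝ) with hRdef
  have hR0 : (0:ℝ) ≤ R := Nat.cast_nonneg n
  refine ⟨ε / (2 * (R + 1)), by positivity, ?_⟩
  intro t ht A hA hμA
  set δ : ℝ := ε / (2 * (R + 1)) with hδdef
  have hst : τ ≤ t - τ := by linarith
  have hstpos : 0 < t - τ := by linarith
  -- the indicator function of A
  set f : Ω → ℝ := A.indicator (fun _ => (1:ℝ)) with hfdef
  have hfbd1 : ∀ z, |f z| ≤ 1 := by
    intro z; by_cases h : z ∈ A <;> simp [hfdef, Set.indicator, h]
  have hf : Bb f := ⟨measurable_const.indicator hA, 1, hfbd1⟩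
  have hf0 : ∀ z, 0 ≤ f z := by
    intro z; by_cases h : z ∈ A <;> simp [hfdef, Set.indicator, h]
  set g : Ω → ℝ := T (t - τ) f with hgdef
  have hgBb : Bb g := hTBb _ (by linarith) f hf
  have hgnn : ∀ y, 0 ≤ g y := hpos _ (by linarith) f hf hf0
  have hgM : ∀ y, |g y| ≤ M' := fun y => (hM (t - τ) hst f hf hfbd1 y).trans (le_max_left _ _)
  have hg_int : Integrable g μ :=
    ⟨hgBb.1.aestronglyMeasurable, HasFiniteIntegral.of_bounded (C := M')
      (ae_of_all _ fun y => by rw [Real.norm_eq_abs]; exact hgM y)⟩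
  have h_int_g : ∫ y, g y ∂μ = (μ A).toReal := by
    rw [hgdef, hinv (t - τ) (by linarith) f hf, hfdef, integral_indicator_const (1:ℝ) hA]
    simp
    rfl
  have h_int_g_lt : ∫ y, g y ∂μ < δ := by
    rw [h_int_g]
    exact (ENNReal.lt_ofReal_iff_toReal_lt (measure_ne_top μ A)).1 hμA
  -- relate the set integral to the semigroup
  have htpos : 0 < t := by linarith
  obtain ⟨-, -, hrep_t⟩ := hK t htpos x
  have hTtf : T t f x = ∫ y in A, K t x y ∂μ := by
    rw [hrep_t f hf]
    have : (fun y => K t x y * f y) = A.indicator (K t x) := by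
      funext y; by_cases h : y ∈ A <;> simp [hfdef, Set.indicator, h]
    rw [this, integral_indicator hA]
  have hsplit : T t f x = ∫ y, K τ x y * g y ∂μ := by
    have h1 : T t f = T τ g := by
      conv_lhs => rw [show t = τ + (t - τ) by ring]
      exact hsg τ (t - τ) hτ.le (by linarith) f hf
    rw [h1, hK0rep g hgBb]
  rw [← hTtf, hsplit]
  -- bound the integral
  have hKg_int : Integrable (fun y => K τ x y * g y) μ := by
    have := hK0int.bdd_mul hgBb.1.aestronglyMeasurable (c := M') (ae_of_all _ fun y => by
      rw [Real.norm_eq_abs]; exact hgM y)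
    exact this.congr (ae_of_all _ fun y => mul_comm _ _)
  have hFn_int : Integrable (fun y => max (K τ x y - R) 0) μ :=
    (hK0int.sub (integrable_const R)).pos_part
  have hrhs_int : Integrable (fun y => R * g y + max (K τ x y - R) 0 * M') μ :=
    (hg_int.const_mul R).add (hFn_int.mul_const M')
  have hmono : ∫ y, K τ x y * g y ∂μ ≤ ∫ y, (R * g y + max (K τ x y - R) 0 * M') ∂μ := by
    refine integral_mono_ae hKg_int hrhs_int ?_
    filter_upwards [hK0nn] with y hy
    rcases le_or_gt (K τ x y) R with h | h
    · have h1 : max (K τ x y - R) 0 = 0 := max_eq_right (by linarith)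
      rw [h1]
      nlinarith [hgnn y]
    · have h1 : max (K τ x y - R) 0 = K τ x y - R := max_eq_left (by linarith)
      rw [h1]
      have h2 := abs_le.mp (hgM y)
      nlinarith [hgnn y]
  have hsum : ∫ y, (R * g y + max (K τ x y - R) 0 * M') ∂μ
      = R * ∫ y, g y ∂μ + (∫ y, max (K τ x y - R) 0 ∂μ) * M' := by
    rw [integral_add (hg_int.const_mul R) (hFn_int.mul_const M'),
      integral_const_mul, integral_mul_const]
  have hIg0 : 0 ≤ ∫ y, g y ∂μ := integral_nonneg hgnn
  have hδeq : (R + 1) * δ = ε / 2 := by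
    rw [hδdef]; field_simp
  have hFn_lt : (∫ y, max (K τ x y - R) 0 ∂μ) * M' < ε / 2 := by
    have h2 : (ε / (2 * M')) * M' = ε / 2 := by field_simp
    calc (∫ y, max (K τ x y - R) 0 ∂μ) * M' < (ε / (2 * M')) * M' :=
          mul_lt_mul_of_pos_right hn hM'pos
      _ = ε / 2 := h2
  have hRg_lt : R * ∫ y, g y ∂μ ≤ ε / 2 := by
    have h1 : R * ∫ y, g y ∂μ ≤ R * δ := mul_le_mul_of_nonneg_left h_int_g_lt.le hR0
    have hδpos : 0 < δ := by rw [hδdef]; positivity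
    nlinarith
  calc ∫ y, K τ x y * g y ∂μ ≤ _ := hmono
    _ = R * ∫ y, g y ∂μ + (∫ y, max (K τ x y - R) 0 ∂μ) * M' := hsum
    _ < ε / 2 + ε / 2 := by linarith
    _ = ε := by ring
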